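/- Suppose Δ ≠ 0. Then the point C = ((α1·a1 + β3·a2 + β2·a3)/(2Δ), (β3·a1 + α2·a2 + β1·a3)/(2Δ), (β2·a1 + β1·a2 + α3·a3)/(2Δ)) lies on all six B-midplanes of the Standard tetrahedron X0X1X2X3; that is, (X_j − X_i)·_B (C − (X_i + X_j)/2) = 0 for all 0 ≤ i < j ≤ 3. -/

import Mathlib

open Matrix

/-- The `B`-scalar product of two vectors in `F³`: `u ·_B v = u B vᵀ`. -/
def bdot {F : Type*} [Field F] (B : Matrix (Fin 3) (Fin 3) F) (u v : Fin 3 → F) : F :=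
  u ⬝ᵥ B.mulVec v

/-- The Standard tetrahedron `X0 = (0,0,0)`, `X1 = (1,0,0)`, `X2 = (0,1,0)`, `X3 = (0,0,1)`. -/
def stdTet {F : Type*} [Field F] : Fin 4 → (Fin 3 → F) :=
  ![![0, 0, 0], ![1, 0, 0], ![0, 1, 0], ![0, 0, 1]]

/-- If `Δ = det B ≠ 0`, the explicit point
`C = ((α1·a1 + β3·a2 + β2·a3)/(2Δ), (β3·a1 + α2·a2 + β1·a3)/(2Δ), (β2·a1 + β1·a2 + α3·a3)/(2Δ))`
(where `a1, a2, a3` are the diagonal entries of `B` and the `α`'s, `β`'s are the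
entries of the adjugate of `B`) lies on all six B-midplanes of the Standard tetrahedron. -/
theorem circumcentre_standard_tetrahedron {F : Type*} [Field F]
    (h2 : (2 : F) ≠ 0) (h3 : (3 : F) ≠ 0)
    (B : Matrix (Fin 3) (Fin 3) F) (hB : B.IsSymm) (hΔ : B.det ≠ 0)
    (C : Fin 3 → F)
    (hC : C = ![(B.adjugate 0 0 * B 0 0 + B.adjugate 0 1 * B 1 1 + B.adjugate 0 2 * B 2 2) / (2 * B.det),
                (B.adjugate 0 1 * B 0 0 + B.adjugate 1 1 * B 1 1 + B.adjugate 1 2 * B 2 2) / (2 * B.det),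
                (B.adjugate 0 2 * B 0 0 + B.adjugate 1 2 * B 1 1 + B.adjugate 2 2 * B 2 2) / (2 * B.det)]) :
    ∀ i j : Fin 4, i < j →
      bdot B (stdTet j - stdTet i) (C - (2 : F)⁻¹ • (stdTet i + stdTet j)) = 0 := by
  have h2d : (2 : F) * B.det ≠ 0 := mul_ne_zero h2 hΔ
  have hadj : ∀ i j : Fin 3, B.adjugate i j = B.adjugate j i := by
    intro i j
    conv_lhs => rw [← hB.eq]
    rw [← Matrix.adjugate_transpose, Matrix.transpose_apply]
  have hBA : ∀ k l : Fin 3, B k 0 * B.adjugate 0 l + B k 1 * B.adjugate 1 l +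
      B k 2 * B.adjugate 2 l = if k = l then B.det else 0 := by
    intro k l
    have h := congrFun (congrFun (Matrix.mul_adjugate B) k) l
    simpa [Matrix.mul_apply, Fin.sum_univ_three, Matrix.one_apply, mul_ite, mul_zero] using h
  have hkey : ∀ k : Fin 3, B k 0 * C 0 + B k 1 * C 1 + B k 2 * C 2 = B k k / 2 := by
    have e00 := hBA 0 0; have e01 := hBA 0 1; have e02 := hBA 0 2
    have e10 := hBA 1 0; have e11 := hBA 1 1; have e12 := hBA 1 2
    have e20 := hBA 2 0; have e21 := hBA 2 1; have e22 := hBA 2 2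
    simp only [hadj 1 0, hadj 2 0, hadj 2 1, if_true, if_false]
      at e00 e01 e02 e10 e11 e12 e20 e21 e22
    simp only [show (0:Fin 3) ≠ 1 by decide, show (0:Fin 3) ≠ 2 by decide,
      show (1:Fin 3) ≠ 0 by decide, show (1:Fin 3) ≠ 2 by decide,
      show (2:Fin 3) ≠ 0 by decide, show (2:Fin 3) ≠ 1 by decide,
      if_neg, if_pos, ne_eq, not_false_eq_true] at e00 e01 e02 e10 e11 e12 e20 e21 e22
    subst hC
    intro k
    fin_cases k
    · show B 0 0 * _ + B 0 1 * _ + B 0 2 * _ = B 0 0 / 2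
      simp only [Matrix.cons_val_zero, Matrix.cons_val_one, Matrix.head_cons,
        Matrix.cons_val_two, Matrix.tail_cons]
      field_simp
      linear_combination B 0 0 * e00 + B 1 1 * e01 + B 2 2 * e02
    · show B 1 0 * _ + B 1 1 * _ + B 1 2 * _ = B 1 1 / 2
      simp only [Matrix.cons_val_zero, Matrix.cons_val_one, Matrix.head_cons,
        Matrix.cons_val_two, Matrix.tail_cons]
      field_simp
      linear_combination B 0 0 * e10 + B 1 1 * e11 + B 2 2 * e12
    · show B 2 0 * _ + B 2 1 * _ + B 2 2 * _ = B 2 2 / 2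
      simp only [Matrix.cons_val_zero, Matrix.cons_val_one, Matrix.head_cons,
        Matrix.cons_val_two, Matrix.tail_cons]
      field_simp
      linear_combination B 0 0 * e20 + B 1 1 * e21 + B 2 2 * e22
  have h10 : B 1 0 = B 0 1 := by rw [← hB.apply]
  have h20 : B 2 0 = B 0 2 := by rw [← hB.apply]
  have h21 : B 2 1 = B 1 2 := by rw [← hB.apply]
  have k0 := hkey 0; have k1 := hkey 1; have k2 := hkey 2
  intro i j hij
  fin_cases i <;> fin_cases j <;> simp only [Fin.mk_lt_mk] at hij <;> try omega
  all_goals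
    simp [bdot, stdTet, Matrix.mulVec, dotProduct, Fin.sum_univ_three]
  · linear_combination k0
  · linear_combination k1
  · linear_combination k2
  · linear_combination k1 - k0 - 2⁻¹ * h10
  · linear_combination k2 - k0 - 2⁻¹ * h20
  · linear_combination k2 - k1 - 2⁻¹ * h21
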